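/- Let λ > 0, δ > 0, α := C₃ δ (e^{λδ} - 1)/λ with C₃ ≥ 0. Define a sequence (a_k) of nonnegative reals by a_k = e^{-kλδ} b_k where b_k ≤ C₁ + (C₂/λ) e^{kλδ} + α ∑_{i=0}^{k-1} (C₁ + (C₂/λ) e^{iλδ})(1+α)^{k-1-i} for constants C₁, C₂ ≥ 0. If e^{-λδ}(1+α) < 1, then for all k, a_k ≤ C₁ + (C₂/λ) · (e^{λδ} - 1)/(e^{λδ} - 1 - α), so (a_k) is uniformly bounded. -/
import Mathlib


open Real Finset

/-- Discrete core of the boundedness lemma: if `a k = e^{-kλδ} b k` with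
`b k ≤ C₁ + (C₂/λ) e^{kλδ} + α ∑_{i<k} (C₁ + (C₂/λ) e^{iλδ}) (1+α)^{k-1-i}`,
`α = C₃ δ (e^{λδ}-1)/λ`, and `e^{-λδ}(1+α) < 1`, then
`a k ≤ C₁ + (C₂/λ)·(e^{λδ}-1)/(e^{λδ}-1-α)` for all `k`. -/
theorem discrete_sequence_bound
    (lam δ C₁ C₂ C₃ : ℝ) (a b : ℕ → ℝ)
    (hlam : 0 < lam) (hδ : 0 < δ) (hC₁ : 0 ≤ C₁) (hC₂ : 0 ≤ C₂) (hC₃ : 0 ≤ C₃)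
    (ha_nonneg : ∀ k, 0 ≤ a k)
    (ha : ∀ k : ℕ, a k = Real.exp (-(k * lam * δ)) * b k)
    (hb : ∀ k : ℕ, b k ≤ C₁ + C₂ / lam * Real.exp (k * lam * δ)
      + (C₃ * δ * (Real.exp (lam * δ) - 1) / lam) *
        ∑ i ∈ Finset.range k,
          (C₁ + C₂ / lam * Real.exp (i * lam * δ))
            * (1 + C₃ * δ * (Real.exp (lam * δ) - 1) / lam) ^ (k - 1 - i))
    (hsmall : Real.exp (-(lam * δ)) * (1 + C₃ * δ * (Real.exp (lam * δ) - 1) / lam) < 1) :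
    ∀ k : ℕ, a k ≤ C₁ + C₂ / lam * (Real.exp (lam * δ) - 1)
      / (Real.exp (lam * δ) - 1 - C₃ * δ * (Real.exp (lam * δ) - 1) / lam) := by
  intro k
  set E := Real.exp (lam * δ) with hE
  have hEpos : 0 < E := Real.exp_pos _
  have hE1 : 1 < E := by rw [hE]; nlinarith [Real.add_one_le_exp (lam * δ), mul_pos hlam hδ]
  set α := C₃ * δ * (E - 1) / lam with hαdef
  have hα0 : 0 ≤ α := div_nonneg (mul_nonneg (mul_nonneg hC₃ hδ.le) (by linarith)) hlam.le
  rw [Real.exp_neg, ← hE] at hsmall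
  have h1α : 1 + α < E := by
    have h := mul_lt_mul_of_pos_left hsmall hEpos
    rw [← mul_assoc, mul_inv_cancel₀ hEpos.ne', one_mul, mul_one] at h
    exact h
  have hD : 0 < E - 1 - α := by linarith
  have hEk : ∀ n : ℕ, Real.exp ((n : ℝ) * lam * δ) = E ^ n := fun n => by
    rw [mul_assoc, Real.exp_nat_mul, hE]
  have hbk := hb k
  simp only [hEk] at hbk
  have hak := ha k
  rw [Real.exp_neg, hEk] at hak
  set S1 : ℝ := ∑ i ∈ Finset.range k, (1 + α) ^ i with hS1def
  set S2 : ℝ := ∑ i ∈ Finset.range k, E ^ i * (1 + α) ^ (k - 1 - i) with hS2def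
  have hS1 : S1 * ((1 + α) - 1) = (1 + α) ^ k - 1 := geom_sum_mul _ _
  have hS2 : S2 * (E - (1 + α)) = E ^ k - (1 + α) ^ k := geom_sum₂_mul _ _ _
  have hsplit : (∑ i ∈ Finset.range k,
      (C₁ + C₂ / lam * E ^ i) * (1 + α) ^ (k - 1 - i)) = C₁ * S1 + C₂ / lam * S2 := by
    have hrefl : (∑ i ∈ Finset.range k, (1 + α) ^ (k - 1 - i)) = S1 :=
      Finset.sum_range_reflect (fun i => (1 + α) ^ i) k
    rw [← hrefl, Finset.mul_sum, Finset.mul_sum, ← Finset.sum_add_distrib]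
    exact Finset.sum_congr rfl fun i _ => by ring
  rw [hsplit] at hbk
  have hP : (0:ℝ) < (1 + α) ^ k := by positivity
  have hPQ : (1 + α) ^ k ≤ E ^ k := pow_le_pow_left₀ (by linarith) (by linarith) k
  have hQ : (0:ℝ) < E ^ k := by positivity
  have expand : (E - 1 - α) * (C₁ + C₂ / lam * E ^ k + α * (C₁ * S1 + C₂ / lam * S2))
      = (E - 1 - α) * (C₁ * (1 + α) ^ k + C₂ / lam * E ^ k)
        + C₂ / lam * α * (E ^ k - (1 + α) ^ k) := by
    linear_combination (E - 1 - α) * C₁ * hS1 + C₂ / lam * α * hS2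
  have key : (E - 1 - α) * b k ≤ E ^ k * ((E - 1 - α) * (C₁ + C₂ / lam) + C₂ / lam * α) := by
    have h6 := mul_le_mul_of_nonneg_left hbk hD.le
    rw [expand] at h6
    have t1 : 0 ≤ (E - 1 - α) * C₁ * (E ^ k - (1 + α) ^ k) :=
      mul_nonneg (mul_nonneg hD.le hC₁) (by linarith)
    have t2 : 0 ≤ C₂ / lam * α * (1 + α) ^ k :=
      mul_nonneg (mul_nonneg (div_nonneg hC₂ hlam.le) hα0) hP.le
    nlinarith [h6, t1, t2]
  have h5 : a k * (E - 1 - α) ≤ (E - 1 - α) * (C₁ + C₂ / lam) + C₂ / lam * α := by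
    rw [hak]
    calc (E ^ k)⁻¹ * b k * (E - 1 - α) = (E ^ k)⁻¹ * ((E - 1 - α) * b k) := by ring
      _ ≤ (E ^ k)⁻¹ * (E ^ k * ((E - 1 - α) * (C₁ + C₂ / lam) + C₂ / lam * α)) :=
          mul_le_mul_of_nonneg_left key (by positivity)
      _ = (E - 1 - α) * (C₁ + C₂ / lam) + C₂ / lam * α := by
          rw [← mul_assoc, inv_mul_cancel₀ hQ.ne', one_mul]
  have hrw : C₁ + C₂ / lam * (E - 1) / (E - 1 - α)
      = ((E - 1 - α) * (C₁ + C₂ / lam) + C₂ / lam * α) / (E - 1 - α) := by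
    field_simp
    ring
  rw [hrw, le_div_iff₀ hD]
  linarith
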